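/- For any real number $x$ and constant $c > 0$, if a twice-differentiable function $f : \mathbb{R} \to \mathbb{R}$ satisfies $f(0)=1$, $f'(0)=0$, and $f''(t) \leq c\, f(t)$ with $f(t) > 0$ for all $t$, then $f(x) \leq \cosh(\sqrt{c}\,x) \leq e^{cx^2/2}$. -/

import Mathlib

theorem stmt11 (c : ℝ) (hc : 0 < c) (f f' f'' : ℝ → ℝ)
    (hf : ∀ t, HasDerivAt f (f' t) t) (hf' : ∀ t, HasDerivAt f' (f'' t) t)
    (h0 : f 0 = 1) (h0' : f' 0 = 0) (hle : ∀ t, f'' t ≤ c * f t) (hpos : ∀ t, 0 < f t)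
    (x : ℝ) :
    f x ≤ Real.cosh (Real.sqrt c * x) ∧
      Real.cosh (Real.sqrt c * x) ≤ Real.exp (c * x ^ 2 / 2) := by
  set s := Real.sqrt c with hs
  have hs2 : s * s = c := Real.mul_self_sqrt hc.le
  have hch : ∀ t : ℝ, HasDerivAt (fun t => Real.cosh (s * t)) (Real.sinh (s * t) * s) t := by
    intro t
    have := (Real.hasDerivAt_cosh (s * t)).comp t ((hasDerivAt_id t).const_mul s)
    refine this.congr_deriv ?_
    ring
  have hchpos : ∀ t : ℝ, 0 < Real.cosh (s * t) := fun t => Real.cosh_pos _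
  -- Wronskian
  set W : ℝ → ℝ := fun t => f' t * Real.cosh (s * t) - f t * (Real.sinh (s * t) * s) with hW
  have hWd : ∀ t, HasDerivAt W ((f'' t - c * f t) * Real.cosh (s * t)) t := by
    intro t
    have h1 := ((hf' t).mul (hch t)).sub
      ((hf t).mul (((Real.hasDerivAt_sinh (s * t)).comp t ((hasDerivAt_id t).const_mul s)).mul_const s))
    refine h1.congr_deriv ?_
    simp only [Function.comp_def]
    rw [← hs2]
    ring
  have hWanti : Antitone W := by
    apply antitone_of_hasDerivAt_nonpos hWd
    intro t
    exact mul_nonpos_of_nonpos_of_nonneg (by linarith [hle t]) (hchpos t).le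
  have hW0 : W 0 = 0 := by simp [hW, h0']
  -- the quotient u
  set u : ℝ → ℝ := fun t => f t / Real.cosh (s * t) with hu
  have hud : ∀ t, HasDerivAt u (W t / (Real.cosh (s * t)) ^ 2) t := by
    intro t
    have := (hf t).div (hch t) (hchpos t).ne'
    exact this
  have hu0 : u 0 = 1 := by simp [hu, h0]
  have hux : u x ≤ 1 := by
    rcases le_total 0 x with hx | hx
    · have hanti : AntitoneOn u (Set.Ici 0) := by
        apply antitoneOn_of_hasDerivWithinAt_nonpos (convex_Ici 0)
          (fun t _ => (hud t).continuousAt.continuousWithinAt)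
          (fun t _ => (hud t).hasDerivWithinAt)
        intro t ht
        rw [interior_Ici] at ht
        have : W t ≤ 0 := hW0 ▸ hWanti (le_of_lt ht)
        exact div_nonpos_of_nonpos_of_nonneg this (sq_nonneg _)
      calc u x ≤ u 0 := hanti Set.self_mem_Ici hx hx
        _ = 1 := hu0
    · have hmono : MonotoneOn u (Set.Iic 0) := by
        apply monotoneOn_of_hasDerivWithinAt_nonneg (convex_Iic 0)
          (fun t _ => (hud t).continuousAt.continuousWithinAt)
          (fun t _ => (hud t).hasDerivWithinAt)
        intro t ht
        rw [interior_Iic] at ht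
        have : 0 ≤ W t := hW0 ▸ hWanti (le_of_lt ht)
        exact div_nonneg this (sq_nonneg _)
      calc u x ≤ u 0 := hmono hx Set.self_mem_Iic hx
        _ = 1 := hu0
  constructor
  · have := (div_le_one (hchpos x)).mp hux
    exact this
  · have h1 := Real.cosh_le_exp_half_sq (s * x)
    have : (s * x) ^ 2 = c * x ^ 2 := by rw [mul_pow]; nlinarith [hs2]
    rwa [this] at h1
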